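/- Let k ≥ 4 and for each m with 0 ≤ m ≤ P_k − 1 let S_k^{(m)} be the set of natural numbers N with 5 + m·∏_{i=1}^{k−1} P_i ≤ N ≤ 4 + (m+1)·∏_{i=1}^{k−1} P_i. Then every subset S_k^{(m)} contains at least ∏_{i=2}^{k−1} (P_i − 2) − 2·∏_{i=2}^{k−2} (P_i − 2) natural numbers N such that N and N+2 both lie in S_k^{(m)} and both are coprime to ∏_{i=1}^{k} P_i. -/

import Mathlib

/-- `P i` is the `i`-th prime number (1-indexed): `P 1 = 2`, `P 2 = 3`, `P 3 = 5`, ... -/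
noncomputable def P (i : ℕ) : ℕ := Nat.nth Nat.Prime (i - 1)

/-- The `k`-th primorial, `∏_{i=1}^{k} P_i`. -/
noncomputable def primor (k : ℕ) : ℕ := ∏ i ∈ Finset.Icc 1 k, P i


open Finset
open scoped Classical

/-- The set of "twin residues" mod `q`. -/
noncomputable def tw (q : ℕ) : Finset ℕ :=
  (Finset.range q).filter (fun r => Nat.Coprime r q ∧ Nat.Coprime (r + 2) q)

lemma coprime_mod_iff (a n : ℕ) : Nat.Coprime (a % n) n ↔ Nat.Coprime a n := by
  have h := Nat.gcd_rec n a
  unfold Nat.Coprime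
  rw [← h, Nat.gcd_comm]

lemma coprime_of_modEq {a b n : ℕ} (h : a ≡ b [MOD n]) :
    Nat.Coprime a n ↔ Nat.Coprime b n := by
  rw [← coprime_mod_iff a n, ← coprime_mod_iff b n, h]

lemma twin_congr {a b q : ℕ} (h : a ≡ b [MOD q]) :
    (Nat.Coprime a q ∧ Nat.Coprime (a + 2) q) ↔
      (Nat.Coprime b q ∧ Nat.Coprime (b + 2) q) :=
  and_congr (coprime_of_modEq h) (coprime_of_modEq (h.add_right 2))

lemma mod_injOn {a q : ℕ} :
    ∀ N1 ∈ Finset.Ico a (a + q), ∀ N2 ∈ Finset.Ico a (a + q),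
      N1 % q = N2 % q → N1 = N2 := by
  intro N1 h1 N2 h2 h
  simp only [Finset.mem_Ico] at h1 h2
  rcases le_total N1 N2 with hle | hle
  · have hd := (Nat.modEq_iff_dvd' hle).mp h
    rcases Nat.eq_zero_or_pos (N2 - N1) with h0 | h0
    · omega
    · have := Nat.le_of_dvd h0 hd; omega
  · have hd := (Nat.modEq_iff_dvd' hle).mp h.symm
    rcases Nat.eq_zero_or_pos (N1 - N2) with h0 | h0
    · omega
    · have := Nat.le_of_dvd h0 hd; omega

lemma card_Ico_twin (a q : ℕ) (hq : 0 < q) :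
    ((Finset.Ico a (a + q)).filter
      (fun N => Nat.Coprime N q ∧ Nat.Coprime (N + 2) q)).card = (tw q).card := by
  apply Finset.card_bij (fun N _ => N % q)
  · intro N hN
    simp only [Finset.mem_filter] at hN
    simp only [tw, Finset.mem_filter, Finset.mem_range]
    exact ⟨Nat.mod_lt _ hq, (twin_congr (Nat.mod_modEq N q)).mpr hN.2⟩
  · intro N1 h1 N2 h2 h
    exact mod_injOn N1 (Finset.mem_filter.mp h1).1 N2 (Finset.mem_filter.mp h2).1 h
  · intro r hr
    simp only [tw, Finset.mem_filter, Finset.mem_range] at hr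
    obtain ⟨N, hN, hNr⟩ :=
      Finset.surj_on_of_inj_on_of_card_le (s := Finset.Ico a (a + q))
        (t := Finset.range q) (fun N _ => N % q)
        (fun N _ => Finset.mem_range.mpr (Nat.mod_lt _ hq))
        (fun N1 N2 hN1 hN2 h => mod_injOn N1 hN1 N2 hN2 h)
        (by rw [Finset.card_range, Nat.card_Ico]; omega)
        r (Finset.mem_range.mpr hr.1)
    have hmod : N % q = r := hNr.symm
    have hco : N ≡ r [MOD q] := by
      show N % q = r % q; rw [hmod, Nat.mod_eq_of_lt hr.1]
    refine ⟨N, Finset.mem_filter.mpr ⟨hN, (twin_congr hco).mpr hr.2⟩, hmod⟩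

lemma affine_injOn {q c : ℕ} (hc : Nat.Coprime c q) (b : ℕ) :
    ∀ s1 ∈ Finset.range q, ∀ s2 ∈ Finset.range q,
      (c * s1 + b) % q = (c * s2 + b) % q → s1 = s2 := by
  intro s1 h1 s2 h2 h
  simp only [Finset.mem_range] at h1 h2
  have h' : c * s1 + b ≡ c * s2 + b [MOD q] := h
  have h'' : s1 ≡ s2 [MOD q] :=
    Nat.ModEq.cancel_left_of_coprime (by rwa [Nat.gcd_comm, ← Nat.Coprime]) (h'.add_right_cancel' b)
  calc s1 = s1 % q := (Nat.mod_eq_of_lt h1).symm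
    _ = s2 % q := h''
    _ = s2 := Nat.mod_eq_of_lt h2

lemma card_affine_twin (q c b : ℕ) (hq : 0 < q) (hc : Nat.Coprime c q) :
    ((Finset.range q).filter
      (fun s => Nat.Coprime (c * s + b) q ∧ Nat.Coprime (c * s + b + 2) q)).card
      = (tw q).card := by
  apply Finset.card_bij (fun s _ => (c * s + b) % q)
  · intro s hs
    simp only [Finset.mem_filter, Finset.mem_range] at hs
    simp only [tw, Finset.mem_filter, Finset.mem_range]
    exact ⟨Nat.mod_lt _ hq, (twin_congr (Nat.mod_modEq _ q)).mpr hs.2⟩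
  · intro s1 h1 s2 h2 h
    exact affine_injOn hc b s1 (Finset.mem_filter.mp h1).1 s2 (Finset.mem_filter.mp h2).1 h
  · intro r hr
    simp only [tw, Finset.mem_filter, Finset.mem_range] at hr
    obtain ⟨s, hs, hsr⟩ :=
      Finset.surj_on_of_inj_on_of_card_le (s := Finset.range q)
        (t := Finset.range q) (fun s _ => (c * s + b) % q)
        (fun s _ => Finset.mem_range.mpr (Nat.mod_lt _ hq))
        (fun s1 s2 h1 h2 h => affine_injOn hc b s1 h1 s2 h2 h)
        le_rfl r (Finset.mem_range.mpr hr.1)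
    have hmod : (c * s + b) % q = r := hsr.symm
    have hco : c * s + b ≡ r [MOD q] := by
      show (c * s + b) % q = r % q; rw [hmod, Nat.mod_eq_of_lt hr.1]
    refine ⟨s, Finset.mem_filter.mpr ⟨hs, (twin_congr hco).mpr hr.2⟩, hmod⟩

lemma tw_mul {u v : ℕ} (hu : 0 < u) (hv : 0 < v) (huv : Nat.Coprime u v) :
    (tw (u * v)).card = (tw u).card * (tw v).card := by
  have huv' : 0 < u * v := Nat.mul_pos hu hv
  rw [← Finset.card_product]
  have hprod : tw u ×ˢ tw v =
      (Finset.range u ×ˢ Finset.range v).filter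
        (fun p => (Nat.Coprime p.1 u ∧ Nat.Coprime (p.1 + 2) u) ∧
          (Nat.Coprime p.2 v ∧ Nat.Coprime (p.2 + 2) v)) :=
    (Finset.filter_product _ _).symm
  rw [hprod]
  apply Finset.card_bij (fun r _ => (r % u, r % v))
  · intro r hr
    simp only [tw, Finset.mem_filter, Finset.mem_range] at hr
    obtain ⟨hrlt, h1, h2⟩ := hr
    rw [Nat.coprime_mul_iff_right] at h1 h2
    simp only [Finset.mem_filter, Finset.mem_product, Finset.mem_range]
    refine ⟨⟨Nat.mod_lt _ hu, Nat.mod_lt _ hv⟩, ?_, ?_⟩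
    · exact (twin_congr (Nat.mod_modEq r u)).mpr ⟨h1.1, h2.1⟩
    · exact (twin_congr (Nat.mod_modEq r v)).mpr ⟨h1.2, h2.2⟩
  · intro r1 h1 r2 h2 h
    simp only [tw, Finset.mem_filter, Finset.mem_range] at h1 h2
    have hu' : r1 ≡ r2 [MOD u] := congrArg Prod.fst h
    have hv' : r1 ≡ r2 [MOD v] := congrArg Prod.snd h
    have hm := (Nat.modEq_and_modEq_iff_modEq_mul huv).mp ⟨hu', hv'⟩
    calc r1 = r1 % (u * v) := (Nat.mod_eq_of_lt h1.1).symm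
      _ = r2 % (u * v) := hm
      _ = r2 := Nat.mod_eq_of_lt h2.1
  · rintro ⟨x, y⟩ hxy
    simp only [Finset.mem_filter, Finset.mem_product, Finset.mem_range] at hxy
    obtain ⟨⟨hx, hy⟩, hcx, hcy⟩ := hxy
    obtain ⟨z, hzx, hzy⟩ := Nat.chineseRemainder huv x y
    have hzu : z % (u * v) ≡ x [MOD u] :=
      ((Nat.mod_modEq z (u * v)).of_mul_right v).trans hzx
    have hzv : z % (u * v) ≡ y [MOD v] :=
      ((Nat.mod_modEq z (u * v)).of_mul_left u).trans hzy
    refine ⟨z % (u * v), ?_, ?_⟩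
    · have c1 : Nat.Coprime (z % (u * v)) u ∧ Nat.Coprime (z % (u * v) + 2) u :=
        (twin_congr hzu).mpr hcx
      have c2 : Nat.Coprime (z % (u * v)) v ∧ Nat.Coprime (z % (u * v) + 2) v :=
        (twin_congr hzv).mpr hcy
      simp only [tw, Finset.mem_filter, Finset.mem_range]
      exact ⟨Nat.mod_lt _ huv', Nat.coprime_mul_iff_right.mpr ⟨c1.1, c2.1⟩,
        Nat.coprime_mul_iff_right.mpr ⟨c1.2, c2.2⟩⟩
    · have e1 : z % (u * v) % u = x := by
        have h' : z % (u * v) % u = x % u := hzu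
        rw [h', Nat.mod_eq_of_lt hx]
      have e2 : z % (u * v) % v = y := by
        have h' : z % (u * v) % v = y % v := hzv
        rw [h', Nat.mod_eq_of_lt hy]
      simp only [Prod.mk.injEq]
      exact ⟨e1, e2⟩

lemma tw_prime {p : ℕ} (hp : p.Prime) (h2 : 2 < p) : (tw p).card = p - 2 := by
  have hset : tw p = Finset.range p \ {0, p - 2} := by
    ext r
    simp only [tw, Finset.mem_filter, Finset.mem_range, Finset.mem_sdiff,
      Finset.mem_insert, Finset.mem_singleton]
    constructor
    · rintro ⟨hr, h1, h3⟩
      have d1 : ¬ p ∣ r := hp.coprime_iff_not_dvd.mp (Nat.coprime_comm.mp h1)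
      have d3 : ¬ p ∣ (r + 2) := hp.coprime_iff_not_dvd.mp (Nat.coprime_comm.mp h3)
      refine ⟨hr, ?_⟩
      rintro (rfl | rfl)
      · exact d1 (dvd_zero p)
      · exact d3 (by rw [show p - 2 + 2 = p by omega])
    · rintro ⟨hr, hne⟩
      push_neg at hne
      constructor
      · exact hr
      constructor
      · rw [Nat.coprime_comm, hp.coprime_iff_not_dvd]
        intro hd
        exact hne.1 (Nat.eq_zero_of_dvd_of_lt hd hr)
      · rw [Nat.coprime_comm, hp.coprime_iff_not_dvd]
        intro hd
        obtain ⟨c, hc⟩ := hd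
        rcases c with _ | c
        · omega
        rcases c with _ | c
        · exact hne.2 (by omega)
        · have : p * (c + 2) ≥ p * 2 := Nat.mul_le_mul_left p (by omega)
          have : p * (c + 1 + 1) = r + 2 := hc.symm
          nlinarith
  rw [hset, Finset.card_sdiff_of_subset]
  · rw [Finset.card_range, Finset.card_insert_of_notMem (by simp; omega),
      Finset.card_singleton]
  · intro x hx
    simp only [Finset.mem_insert, Finset.mem_singleton] at hx
    rcases hx with rfl | rfl <;> simp only [Finset.mem_range] <;> omega

lemma tw_two : (tw 2).card = 1 := by
  have hset : tw 2 = {1} := by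
    ext r
    simp only [tw, Finset.mem_filter, Finset.mem_range, Finset.mem_singleton]
    constructor
    · rintro ⟨hr, h1, h2⟩
      interval_cases r
      · exact absurd h1 (by decide)
      · rfl
    · rintro rfl
      exact ⟨by norm_num, by decide, by decide⟩
  rw [hset, Finset.card_singleton]

lemma P_prime (i : ℕ) : (P i).Prime := Nat.prime_nth_prime _

lemma P_one : P 1 = 2 := Nat.nth_prime_zero_eq_two

lemma P_two_val : P 2 = 3 := Nat.nth_prime_one_eq_three

lemma P_lt_P {i j : ℕ} (hi : 1 ≤ i) (hij : i < j) : P i < P j := by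
  unfold P
  exact (Nat.nth_lt_nth Nat.infinite_setOf_prime).mpr (by omega)

lemma P_gt_two {i : ℕ} (hi : 2 ≤ i) : 2 < P i := by
  have h := P_lt_P (le_refl 1) (show 1 < i by omega)
  rwa [P_one] at h

lemma primor_succ (k : ℕ) : primor (k + 1) = primor k * P (k + 1) := by
  unfold primor
  exact Finset.prod_Icc_succ_top (by omega) _

lemma primor_pos (k : ℕ) : 0 < primor k :=
  Finset.prod_pos (fun i _ => (P_prime i).pos)

lemma P_dvd_primor {i k : ℕ} (h1 : 1 ≤ i) (h2 : i ≤ k) : P i ∣ primor k :=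
  Finset.dvd_prod_of_mem _ (Finset.mem_Icc.mpr ⟨h1, h2⟩)

lemma coprime_primor_P {j i : ℕ} (h : j < i) : Nat.Coprime (primor j) (P i) := by
  unfold primor
  apply Nat.Coprime.prod_left
  intro t ht
  rw [Finset.mem_Icc] at ht
  exact (Nat.coprime_primes (P_prime t) (P_prime i)).mpr
    (Nat.ne_of_lt (P_lt_P ht.1 (by omega)))

lemma tw_primor : ∀ j, 1 ≤ j → (tw (primor j)).card = ∏ i ∈ Finset.Icc 2 j, (P i - 2) := by
  intro j
  induction j with
  | zero => omega
  | succ n ih =>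
    intro hj
    rcases Nat.lt_or_ge 1 (n + 1) with h1 | h1
    · have hn : 1 ≤ n := by omega
      rw [primor_succ,
        tw_mul (primor_pos n) (P_prime (n + 1)).pos (coprime_primor_P (by omega)),
        ih hn, tw_prime (P_prime (n + 1)) (P_gt_two (by omega)),
        Finset.prod_Icc_succ_top (show 2 ≤ n + 1 by omega)]
    · have hn : n = 0 := by omega
      subst hn
      have h2 : primor 1 = 2 := by
        unfold primor
        rw [Finset.Icc_self, Finset.prod_singleton, P_one]
      rw [h2, tw_two]
      simp

lemma not_coprime_of_common_dvd {d n m : ℕ} (hd : 2 ≤ d) (h1 : d ∣ n) (h2 : d ∣ m) :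
    ¬ Nat.Coprime n m := by
  intro h
  have hg := Nat.dvd_gcd h1 h2
  unfold Nat.Coprime at h
  rw [h] at hg
  exact absurd (Nat.le_of_dvd one_pos hg) (by omega)

lemma div_mod_inj_aux {q c : ℕ} (hc : 0 < c) {L a : ℕ} (hL : L ≤ q * c) :
    ∀ M1 M2 : ℕ, c ∣ M1 → c ∣ M2 → a ≤ M1 → M1 < a + L → a ≤ M2 → M2 < a + L →
      (M1 / c) % q = (M2 / c) % q → M1 = M2 := by
  have key : ∀ M1 M2 : ℕ, c ∣ M1 → c ∣ M2 → a ≤ M1 → M2 < a + L → M1 ≤ M2 →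
      (M1 / c) % q = (M2 / c) % q → M1 = M2 := by
    intro M1 M2 hd1 hd2 hA hB hle hmq
    have f1 : c * (M1 / c) = M1 := Nat.mul_div_cancel' hd1
    have f2 : c * (M2 / c) = M2 := Nat.mul_div_cancel' hd2
    have ht : M1 / c ≤ M2 / c := Nat.div_le_div_right hle
    have hmq' : M1 / c ≡ M2 / c [MOD q] := hmq
    obtain ⟨d, hd⟩ := (Nat.modEq_iff_dvd' ht).mp hmq'
    have h2 : M2 / c = M1 / c + q * d := by omega
    have hM2 : M2 = M1 + c * (q * d) := by
      rw [← f2, h2, Nat.mul_add, f1]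
    rcases Nat.eq_zero_or_pos d with rfl | hdpos
    · simp only [Nat.mul_zero, Nat.add_zero] at hM2
      omega
    · exfalso
      have hge : q * c ≤ c * (q * d) := by
        calc q * c = c * (q * 1) := by ring
          _ ≤ c * (q * d) := Nat.mul_le_mul_left _ (Nat.mul_le_mul_left _ hdpos)
      omega
  intro M1 M2 hd1 hd2 hA1 hB1 hA2 hB2 hmq
  rcases le_total M1 M2 with hle | hle
  · exact key M1 M2 hd1 hd2 hA1 hB2 hle hmq
  · exact (key M2 M1 hd2 hd1 hA2 hB1 hle hmq.symm).symm

lemma card_dvd_twin_le (a L q c : ℕ) (hq : 0 < q) (hc : 0 < c) (hL : L ≤ q * c) :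
    ((Finset.Ico a (a + L)).filter
      (fun N => c ∣ N ∧ Nat.Coprime N q ∧ Nat.Coprime (N + 2) q)).card
    ≤ ((Finset.range q).filter
      (fun s => Nat.Coprime (c * s) q ∧ Nat.Coprime (c * s + 2) q)).card := by
  apply Finset.card_le_card_of_injOn (fun N => (N / c) % q)
  · intro N hN
    simp only [Finset.mem_coe, Finset.mem_filter, Finset.mem_Ico] at hN
    obtain ⟨hNmem, hdvd, hcop⟩ := hN
    have hct : c * (N / c) = N := Nat.mul_div_cancel' hdvd
    have hmod : c * ((N / c) % q) ≡ N [MOD q] := by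
      calc c * ((N / c) % q) ≡ c * (N / c) [MOD q] := (Nat.mod_modEq _ q).mul_left c
        _ = N := hct
    simp only [Finset.mem_coe, Finset.mem_filter, Finset.mem_range]
    exact ⟨Nat.mod_lt _ hq, (coprime_of_modEq hmod).mpr hcop.1,
      (coprime_of_modEq (hmod.add_right 2)).mpr hcop.2⟩
  · intro N1 h1 N2 h2 h
    simp only [Finset.coe_filter, Set.mem_setOf_eq, Finset.mem_Ico] at h1 h2
    exact div_mod_inj_aux hc hL N1 N2 h1.2.1 h2.2.1 h1.1.1 h1.1.2 h2.1.1 h2.1.2 h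

lemma card_dvd2_twin_le (a L q c : ℕ) (hq : 2 ≤ q) (hc : 0 < c) (hL : L ≤ q * c) :
    ((Finset.Ico a (a + L)).filter
      (fun N => c ∣ (N + 2) ∧ Nat.Coprime N q ∧ Nat.Coprime (N + 2) q)).card
    ≤ ((Finset.range q).filter
      (fun s => Nat.Coprime (c * s + (q - 2)) q ∧ Nat.Coprime (c * s + (q - 2) + 2) q)).card := by
  apply Finset.card_le_card_of_injOn (fun N => ((N + 2) / c) % q)
  · intro N hN
    simp only [Finset.mem_coe, Finset.mem_filter, Finset.mem_Ico] at hN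
    obtain ⟨hNmem, hdvd, hcop⟩ := hN
    have hct : c * ((N + 2) / c) = N + 2 := Nat.mul_div_cancel' hdvd
    have hNq : N + q ≡ N [MOD q] := Nat.add_mod_right N q
    have hmod : c * (((N + 2) / c) % q) + (q - 2) ≡ N [MOD q] := by
      calc c * (((N + 2) / c) % q) + (q - 2)
          ≡ c * ((N + 2) / c) + (q - 2) [MOD q] :=
            ((Nat.mod_modEq _ q).mul_left c).add_right _
        _ = N + q := by omega
        _ ≡ N [MOD q] := hNq
    simp only [Finset.mem_coe, Finset.mem_filter, Finset.mem_range]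
    exact ⟨Nat.mod_lt _ (by omega), (coprime_of_modEq hmod).mpr hcop.1,
      (coprime_of_modEq (hmod.add_right 2)).mpr hcop.2⟩
  · intro N1 h1 N2 h2 h
    simp only [Finset.coe_filter, Set.mem_setOf_eq, Finset.mem_Ico] at h1 h2
    have := div_mod_inj_aux (a := a + 2) hc hL (N1 + 2) (N2 + 2) h1.2.1 h2.2.1
      (by omega) (by omega) (by omega) (by omega) h
    omega

open scoped Classical in
/-- For `k ≥ 4`, every block
`S_k^{(m)} = [5 + m·∏_{i=1}^{k-1} P_i, 4 + (m+1)·∏_{i=1}^{k-1} P_i]`, `0 ≤ m ≤ P_k - 1`,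
contains at least `∏_{i=2}^{k-1}(P_i - 2) - 2·∏_{i=2}^{k-2}(P_i - 2)` naturals `N` with
`N` and `N+2` both in the block and both coprime to `∏_{i=1}^k P_i`. -/
theorem prospective_twin_primes_in_each_block (k : ℕ) (hk : 4 ≤ k)
    (m : ℕ) (hm : m ≤ P k - 1) :
    ((Finset.Icc (5 + m * primor (k - 1)) (4 + (m + 1) * primor (k - 1))).filter
      (fun N => N + 2 ∈ Finset.Icc (5 + m * primor (k - 1)) (4 + (m + 1) * primor (k - 1)) ∧
        Nat.Coprime N (primor k) ∧ Nat.Coprime (N + 2) (primor k))).card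
      ≥ ∏ i ∈ Finset.Icc 2 (k - 1), (P i - 2)
        - 2 * ∏ i ∈ Finset.Icc 2 (k - 2), (P i - 2) := by
  have hk1 : 1 ≤ k - 1 := by omega
  -- abbreviations
  have hQ : primor (k - 1) = primor (k - 2) * P (k - 1) := by
    have h := primor_succ (k - 2)
    rwa [show k - 2 + 1 = k - 1 by omega] at h
  have hM : primor k = primor (k - 1) * P k := by
    have h := primor_succ (k - 1)
    rwa [show k - 1 + 1 = k by omega] at h
  set Q : ℕ := primor (k - 1) with hQdef
  set Q' : ℕ := primor (k - 2) with hQ'def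
  set M : ℕ := primor k with hMdef
  set a : ℕ := 5 + m * Q with hadef
  have hIcc : Finset.Icc a (4 + (m + 1) * Q) = Finset.Ico a (a + Q) := by
    have hmq : (m + 1) * Q = m * Q + Q := by ring
    ext x
    rw [Finset.mem_Icc, Finset.mem_Ico]
    omega
  rw [hIcc]
  -- divisibility facts
  have h2Q : 2 ∣ Q := by
    have h := P_dvd_primor (le_refl 1) (show 1 ≤ k - 1 by omega)
    rwa [P_one] at h
  have h3Q : 3 ∣ Q := by
    have h := P_dvd_primor (show 1 ≤ 2 by omega) (show 2 ≤ k - 1 by omega)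
    rwa [P_two_val] at h
  have h2M : 2 ∣ M := by rw [hM]; exact Dvd.dvd.mul_right h2Q _
  have h3M : 3 ∣ M := by rw [hM]; exact Dvd.dvd.mul_right h3Q _
  have hQ'dvd : Q' ∣ Q := ⟨P (k - 1), hQ⟩
  have hQ'2 : 2 ≤ Q' := by
    have h := P_dvd_primor (le_refl 1) (show 1 ≤ k - 2 by omega)
    rw [P_one] at h
    exact Nat.le_of_dvd (primor_pos _) h
  have hcopPk : Nat.Coprime (P k) Q' := (coprime_primor_P (show k - 2 < k by omega)).symm
  have hL : Q ≤ Q' * P k := by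
    rw [hQ]
    exact Nat.mul_le_mul_left _ (le_of_lt (P_lt_P hk1 (by omega)))
  -- the main sets
  set G : Finset ℕ := (Finset.Ico a (a + Q)).filter
    (fun N => Nat.Coprime N M ∧ Nat.Coprime (N + 2) M) with hGdef
  set H : Finset ℕ := (Finset.Ico a (a + Q)).filter
    (fun N => Nat.Coprime N Q ∧ Nat.Coprime (N + 2) Q) with hHdef
  set B0 : Finset ℕ := (Finset.Ico a (a + Q)).filter
    (fun N => P k ∣ N ∧ Nat.Coprime N Q' ∧ Nat.Coprime (N + 2) Q') with hB0def
  set B2 : Finset ℕ := (Finset.Ico a (a + Q)).filter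
    (fun N => P k ∣ (N + 2) ∧ Nat.Coprime N Q' ∧ Nat.Coprime (N + 2) Q') with hB2def
  -- G is contained in the goal set
  have hGsub : G ⊆ (Finset.Ico a (a + Q)).filter
      (fun N => N + 2 ∈ Finset.Ico a (a + Q) ∧
        Nat.Coprime N M ∧ Nat.Coprime (N + 2) M) := by
    intro N hN
    rw [hGdef, Finset.mem_filter] at hN
    obtain ⟨hNmem, c1, c2⟩ := hN
    rw [Finset.mem_Ico] at hNmem
    rw [Finset.mem_filter]
    refine ⟨Finset.mem_Ico.mpr ⟨hNmem.1, hNmem.2⟩, Finset.mem_Ico.mpr ⟨by omega, ?_⟩, c1, c2⟩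
    by_contra hcon
    push_neg at hcon
    have hcase : N = 3 + m * Q + Q ∨ N = 4 + m * Q + Q := by
      rw [hadef] at hNmem hcon
      omega
    rcases hcase with rfl | rfl
    · have h3N : (3 : ℕ) ∣ 3 + m * Q + Q :=
        dvd_add (dvd_add dvd_rfl (h3Q.mul_left m)) h3Q
      exact absurd c1 (not_coprime_of_common_dvd (by omega) h3N h3M)
    · have h2N : (2 : ℕ) ∣ 4 + m * Q + Q :=
        dvd_add (dvd_add (by norm_num) (h2Q.mul_left m)) h2Q
      exact absurd c1 (not_coprime_of_common_dvd (le_refl 2) h2N h2M)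
  -- H is covered by G, B0, B2
  have hHsub : H ⊆ (G ∪ B0) ∪ B2 := by
    intro N hN
    rw [hHdef, Finset.mem_filter] at hN
    obtain ⟨hNmem, c1, c2⟩ := hN
    by_cases hp1 : P k ∣ N
    · refine Finset.mem_union_left _ (Finset.mem_union_right _ ?_)
      rw [hB0def, Finset.mem_filter]
      exact ⟨hNmem, hp1, c1.coprime_dvd_right hQ'dvd, c2.coprime_dvd_right hQ'dvd⟩
    by_cases hp2 : P k ∣ (N + 2)
    · refine Finset.mem_union_right _ ?_
      rw [hB2def, Finset.mem_filter]
      exact ⟨hNmem, hp2, c1.coprime_dvd_right hQ'dvd, c2.coprime_dvd_right hQ'dvd⟩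
    · refine Finset.mem_union_left _ (Finset.mem_union_left _ ?_)
      rw [hGdef, Finset.mem_filter]
      refine ⟨hNmem, ?_, ?_⟩
      · rw [hM]
        exact Nat.coprime_mul_iff_right.mpr
          ⟨c1, ((P_prime k).coprime_iff_not_dvd.mpr hp1).symm⟩
      · rw [hM]
        exact Nat.coprime_mul_iff_right.mpr
          ⟨c2, ((P_prime k).coprime_iff_not_dvd.mpr hp2).symm⟩
  have hcards : H.card ≤ G.card + B0.card + B2.card := by
    calc H.card ≤ ((G ∪ B0) ∪ B2).card := Finset.card_le_card hHsub
      _ ≤ (G ∪ B0).card + B2.card := Finset.card_union_le _ _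
      _ ≤ G.card + B0.card + B2.card :=
          Nat.add_le_add_right (Finset.card_union_le _ _) _
  -- card of H
  have hHcard : H.card = ∏ i ∈ Finset.Icc 2 (k - 1), (P i - 2) := by
    rw [hHdef, card_Ico_twin a Q (primor_pos _), hQdef, tw_primor (k - 1) hk1]
  -- card of B0
  have hB0card : B0.card ≤ ∏ i ∈ Finset.Icc 2 (k - 2), (P i - 2) := by
    calc B0.card ≤ ((Finset.range Q').filter
        (fun s => Nat.Coprime (P k * s) Q' ∧ Nat.Coprime (P k * s + 2) Q')).card := by
          rw [hB0def]
          exact card_dvd_twin_le a Q Q' (P k) (primor_pos _) (P_prime k).pos hL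
      _ = (tw Q').card := by
          have h := card_affine_twin Q' (P k) 0 (primor_pos _) hcopPk
          simpa using h
      _ = ∏ i ∈ Finset.Icc 2 (k - 2), (P i - 2) := by
          rw [hQ'def, tw_primor (k - 2) (by omega)]
  -- card of B2
  have hB2card : B2.card ≤ ∏ i ∈ Finset.Icc 2 (k - 2), (P i - 2) := by
    calc B2.card ≤ ((Finset.range Q').filter
        (fun s => Nat.Coprime (P k * s + (Q' - 2)) Q' ∧
          Nat.Coprime (P k * s + (Q' - 2) + 2) Q')).card := by
          rw [hB2def]
          exact card_dvd2_twin_le a Q Q' (P k) hQ'2 (P_prime k).pos hL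
      _ = (tw Q').card := card_affine_twin Q' (P k) (Q' - 2) (primor_pos _) hcopPk
      _ = ∏ i ∈ Finset.Icc 2 (k - 2), (P i - 2) := by
          rw [hQ'def, tw_primor (k - 2) (by omega)]
  have hfinal := Finset.card_le_card hGsub
  omega
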